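/- arXiv:1109.4646 — 3 statements merged into one kernel-verified Lean document; each statement's English description precedes it below -/
import Mathlib

section
/- Zalcman's conjecture implies Bieberbach's conjecture: If for every function f in the class S and every integer n ≥ 2 the inequality |a_n² − a_{2n−1}| ≤ (n−1)² holds, then for every f in S and every integer n ≥ 2 one has |a_n| ≤ n. -/
open Complex Metric

/-- The `n`-th Taylor coefficient of `f` at `0`. -/
noncomputable def taylorCoeff (f : ℂ → ℂ) (n : ℕ) : ℂ :=
  iteratedDeriv n f 0 / (n.factorial : ℂ)

/-- The class `S` of normalized univalent functions on the unit disk. -/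
def IsClassS (f : ℂ → ℂ) : Prop :=
  DifferentiableOn ℂ f (ball (0 : ℂ) 1) ∧ Set.InjOn f (ball (0 : ℂ) 1) ∧
    f 0 = 0 ∧ deriv f 0 = 1

/-- Coefficient bound coming from holomorphy on the unit ball: for any `0 < r < 1`
the numbers `|a_p| r^p` are bounded. -/
lemma coeff_bound {f : ℂ → ℂ} (hf : DifferentiableOn ℂ f (ball (0 : ℂ) 1))
    {r : ℝ} (hr0 : 0 < r) (hr1 : r < 1) :
    ∃ C : ℝ, ∀ p : ℕ, ‖taylorCoeff f p‖ * r ^ p ≤ C := by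
  have hz : (r : ℂ) ∈ ball (0 : ℂ) 1 := by
    rw [mem_ball_zero_iff]
    simpa [Complex.norm_real, Real.norm_eq_abs, abs_of_pos hr0] using hr1
  have H := Complex.hasSum_taylorSeries_on_ball hf hz
  have hsum := H.summable
  have htend := hsum.tendsto_atTop_zero
  have hb := (htend.norm).bddAbove_range
  obtain ⟨C, hC⟩ := hb
  refine ⟨C, fun p => ?_⟩
  have h1 : ‖(p.factorial : ℂ)⁻¹ • ((r : ℂ) - 0) ^ p • iteratedDeriv p f 0‖ ≤ C :=
    hC (Set.mem_range_self p)
  have h2 : ‖(p.factorial : ℂ)⁻¹ • ((r : ℂ) - 0) ^ p • iteratedDeriv p f 0‖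
      = ‖taylorCoeff f p‖ * r ^ p := by
    rw [norm_smul, norm_smul, norm_inv, norm_pow]
    simp only [sub_zero, Complex.norm_natCast, Complex.norm_real, Real.norm_eq_abs,
      abs_of_pos hr0, taylorCoeff, norm_div, Complex.norm_natCast]
    field_simp
  rw [h2] at h1
  exact h1

/-- **Zalcman's conjecture implies Bieberbach's conjecture**: if for every `f ∈ S`
and every `n ≥ 2` one has `|a_n² − a_{2n−1}| ≤ (n−1)²`, then for every `f ∈ S` and
every `n ≥ 2` one has `|a_n| ≤ n`. -/
theorem zalcman_implies_bieberbach
    (hZ : ∀ f : ℂ → ℂ, IsClassS f → ∀ n : ℕ, 2 ≤ n →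
      ‖taylorCoeff f n ^ 2 - taylorCoeff f (2 * n - 1)‖ ≤ ((n : ℝ) - 1) ^ 2) :
    ∀ f : ℂ → ℂ, IsClassS f → ∀ n : ℕ, 2 ≤ n →
      ‖taylorCoeff f n‖ ≤ (n : ℝ) := by
  intro f hf n₀ hn₀
  by_contra hcon
  push_neg at hcon
  set a : ℕ → ℝ := fun p => ‖taylorCoeff f p‖ with ha_def
  have ha : ∀ p, 0 ≤ a p := fun p => norm_nonneg _
  -- the key consequence of Zalcman's inequality
  have key : ∀ m : ℕ, 2 ≤ m → a m ^ 2 - ((m : ℝ) - 1) ^ 2 ≤ a (2 * m - 1) := by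
    intro m hm
    have h1 := hZ f hf m hm
    have h2 : ‖taylorCoeff f m ^ 2‖ - ‖taylorCoeff f (2 * m - 1)‖
        ≤ ‖taylorCoeff f m ^ 2 - taylorCoeff f (2 * m - 1)‖ := by
      exact
        norm_sub_norm_le (taylorCoeff f m ^ 2) (taylorCoeff f (2 * m - 1))
    have h3 : ‖taylorCoeff f m ^ 2‖ = a m ^ 2 := by
      simp [ha_def, map_pow]
    rw [h3] at h2
    have := h2.trans h1
    linarith
  -- the dyadic index sequence
  set M : ℕ → ℕ := fun k => 2 ^ k * (n₀ - 1) + 1 with hM_def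
  have hM0 : M 0 = n₀ := by simp [hM_def]; omega
  have hMrec : ∀ k, M (k + 1) = 2 * M k - 1 := by
    intro k
    have e : 2 ^ (k + 1) * (n₀ - 1) = 2 * (2 ^ k * (n₀ - 1)) := by ring
    simp only [hM_def]
    omega
  have hM2 : ∀ k, 2 ≤ M k := by
    intro k
    have h1 : 1 ≤ 2 ^ k := Nat.one_le_two_pow
    have h2 : 1 * 1 ≤ 2 ^ k * (n₀ - 1) := Nat.mul_le_mul h1 (by omega)
    simp only [hM_def]; omega
  have hM2R : ∀ k, (2 : ℝ) ≤ (M k : ℝ) := fun k => by exact_mod_cast hM2 k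
  have hMcast : ∀ k, (M (k + 1) : ℝ) = 2 * (M k : ℝ) - 1 := by
    intro k
    rw [hMrec k, Nat.cast_sub (by have := hM2 k; omega)]
    push_cast; ring
  have step : ∀ k, a (M k) ^ 2 - ((M k : ℝ) - 1) ^ 2 ≤ a (M (k + 1)) := by
    intro k
    have := key (M k) (hM2 k)
    rwa [← hMrec k] at this
  -- phase 1: excess grows like δ * 4^k
  set δ : ℝ := a n₀ - n₀ with hδ_def
  have hδ : 0 < δ := by simp only [hδ_def]; linarith [hcon]
  have claim1 : ∀ k, (M k : ℝ) + δ * 4 ^ k ≤ a (M k) := by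
    intro k
    induction k with
    | zero => simp [hM0, hδ_def]
    | succ k IH =>
      have h1 : ((M k : ℝ) + δ * 4 ^ k) ^ 2 ≤ a (M k) ^ 2 :=
        pow_le_pow_left₀ (by positivity) IH 2
      have h2 := step k
      have h3 := hM2R k
      have h4 : (0 : ℝ) < 4 ^ k := by positivity
      have h5 := hMcast k
      have h6 : (4 : ℝ) ^ (k + 1) = 4 ^ k * 4 := pow_succ 4 k
      have h7 : 0 ≤ (2 * (M k : ℝ) - 4) * (δ * 4 ^ k) :=
        mul_nonneg (by linarith) (by positivity)
      nlinarith [h1, h2, h7, sq_nonneg (δ * 4 ^ k), h5, h6]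
  -- choose K with 2 ≤ δ * 4 ^ K
  obtain ⟨K, hK⟩ : ∃ K : ℕ, 2 / δ < 4 ^ K := pow_unbounded_of_one_lt (2 / δ) (by norm_num)
  have hK2 : (2 : ℝ) ≤ δ * 4 ^ K := by
    rw [div_lt_iff₀ hδ] at hK
    nlinarith
  -- phase 2: doubly exponential growth
  have claim2 : ∀ j, (M (K + j) : ℝ) + 2 ^ (2 ^ j) ≤ a (M (K + j)) := by
    intro j
    induction j with
    | zero =>
      have := claim1 K
      simpa using by linarith [hK2, claim1 K]
    | succ j IH =>
      have h2 := step (K + j)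
      have h3 := hM2R (K + j)
      have h5 := hMcast (K + j)
      have hE : (2 : ℝ) ≤ (2 : ℝ) ^ (2 ^ j) := by
        calc (2 : ℝ) = 2 ^ 1 := (pow_one 2).symm
        _ ≤ 2 ^ (2 ^ j) := pow_le_pow_right₀ (by norm_num) Nat.one_le_two_pow
      have h1 : ((M (K + j) : ℝ) + 2 ^ (2 ^ j)) ^ 2 ≤ a (M (K + j)) ^ 2 :=
        pow_le_pow_left₀ (by positivity) IH 2
      have hEsq : ((2 : ℝ) ^ (2 ^ j)) ^ 2 = 2 ^ (2 ^ (j + 1)) := by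
        rw [← pow_mul, pow_succ]
      have hidx : K + (j + 1) = (K + j) + 1 := by omega
      rw [hidx]
      nlinarith [h1, h2, hEsq]
  -- the contradiction with the coefficient bound
  have hDiff : DifferentiableOn ℂ f (ball (0 : ℂ) 1) := hf.1
  set MK : ℕ := M K with hMK_def
  have hMK2 : 2 ≤ MK := hM2 K
  set r : ℝ := (1 / 2 : ℝ) ^ ((2 * (MK : ℝ))⁻¹) with hr_def
  have hMKpos : (0 : ℝ) < (MK : ℝ) := by exact_mod_cast (by omega : 0 < MK)
  have hr0 : 0 < r := Real.rpow_pos_of_pos (by norm_num) _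
  have hr1 : r < 1 := Real.rpow_lt_one (by norm_num) (by norm_num) (by positivity)
  obtain ⟨C, hC⟩ := coeff_bound hDiff hr0 hr1
  have hrM : r ^ (2 * MK) = 1 / 2 := by
    rw [← Real.rpow_natCast r (2 * MK), hr_def, ← Real.rpow_mul (by norm_num)]
    have hne : (2 * (MK : ℝ)) ≠ 0 := by positivity
    have hc : ((2 * MK : ℕ) : ℝ) = 2 * (MK : ℝ) := by exact_mod_cast Nat.cast_mul 2 MK
    rw [hc, inv_mul_cancel₀ hne, Real.rpow_one]
  set s : ℝ := r ^ MK with hs_def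
  have hs0 : 0 < s := by positivity
  have hs2 : s ^ 2 = 1 / 2 := by
    rw [hs_def, ← pow_mul, mul_comm MK 2, hrM]
  set q : ℝ := 2 * s with hq_def
  have hq0 : 0 < q := by positivity
  have hq2 : q ^ 2 = 2 := by
    rw [hq_def, mul_pow, hs2]; norm_num
  have hq1 : 1 < q := by nlinarith
  have hCj : ∀ j : ℕ, q ^ (2 ^ j) ≤ C := by
    intro j
    have hle : M (K + j) ≤ 2 ^ j * MK := by
      have e : 2 ^ (K + j) * (n₀ - 1) = 2 ^ j * (2 ^ K * (n₀ - 1)) := by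
        rw [pow_add]; ring
      have h1 : 1 ≤ 2 ^ j := Nat.one_le_two_pow
      simp only [hM_def, hMK_def]
      calc 2 ^ (K + j) * (n₀ - 1) + 1 = 2 ^ j * (2 ^ K * (n₀ - 1)) + 1 := by rw [e]
        _ ≤ 2 ^ j * (2 ^ K * (n₀ - 1)) + 2 ^ j := by omega
        _ = 2 ^ j * (2 ^ K * (n₀ - 1) + 1) := by ring
    have t1 : r ^ (2 ^ j * MK) ≤ r ^ (M (K + j)) :=
      pow_le_pow_of_le_one hr0.le hr1.le hle
    have t2 : (2 : ℝ) ^ (2 ^ j) ≤ a (M (K + j)) := by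
      have := claim2 j
      have hMpos : (0 : ℝ) ≤ (M (K + j) : ℝ) := Nat.cast_nonneg _
      linarith
    have t3 : (2 : ℝ) ^ (2 ^ j) * r ^ (2 ^ j * MK) ≤ a (M (K + j)) * r ^ (M (K + j)) :=
      mul_le_mul t2 t1 (by positivity) (ha _)
    have t4 : r ^ (2 ^ j * MK) = s ^ (2 ^ j) := by
      rw [hs_def, ← pow_mul, mul_comm MK (2 ^ j)]
    have t5 : (2 : ℝ) ^ (2 ^ j) * s ^ (2 ^ j) = q ^ (2 ^ j) := by
      rw [hq_def, mul_pow]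
    calc q ^ (2 ^ j) = (2 : ℝ) ^ (2 ^ j) * r ^ (2 ^ j * MK) := by rw [t4, t5]
      _ ≤ a (M (K + j)) * r ^ (M (K + j)) := t3
      _ ≤ C := hC _
  obtain ⟨j, hj⟩ : ∃ j : ℕ, C < q ^ j := pow_unbounded_of_one_lt C hq1
  have hjj : q ^ j ≤ q ^ (2 ^ j) :=
    pow_le_pow_right₀ hq1.le (Nat.le_of_lt (Nat.lt_two_pow_self (n := j)))
  have := hCj j
  linarith
end

section
/- Strict inequality for root transforms (inequality (4.1)): For all integers m ≥ 2, n ≥ 3 and every θ ∈ ℝ, the Taylor coefficients of the root transform κ_{m,θ} satisfy |a_n(κ_{m,θ})² − a_{2n−1}(κ_{m,θ})| < (n−1)². -/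
open Complex Metric

/-- The root transform `κ_{m,θ}(z) = z (1 − e^{iθ} z^m)^{−2/m}` of the Koebe
function, using the principal branch of the complex power. -/
noncomputable def rootKoebe (m : ℕ) (θ : ℝ) (z : ℂ) : ℂ :=
  z * (1 - Complex.exp ((θ : ℂ) * I) * z ^ m) ^ (-(2 : ℂ) / (m : ℂ))

/-- Coefficients of the binomial series `(1-w)^(-2/m)`. -/
noncomputable def binomC (m : ℕ) : ℕ → ℝ
  | 0 => 1
  | k + 1 => binomC m k * ((2 / m + k) / (k + 1))

lemma binomC_pos {m : ℕ} (hm : 2 ≤ m) : ∀ k, 0 < binomC m k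
  | 0 => one_pos
  | k + 1 => by
    have hm0 : (0:ℝ) < m := by positivity
    have : (0:ℝ) < 2 / m + k := by positivity
    exact mul_pos (binomC_pos hm k) (by positivity)

lemma binomC_le_one {m : ℕ} (hm : 2 ≤ m) : ∀ k, binomC m k ≤ 1
  | 0 => le_rfl
  | k + 1 => by
    have hm0 : (0:ℝ) < m := by positivity
    have h1 : (2:ℝ) / m ≤ 1 := by
      rw [div_le_one hm0]; exact_mod_cast hm
    have hq : (2 / (m:ℝ) + k) / (k + 1) ≤ 1 := by
      rw [div_le_one (by positivity)]; linarith
    calc binomC m k * ((2 / (m:ℝ) + k) / (k + 1)) ≤ 1 * 1 :=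
          mul_le_mul (binomC_le_one hm k) hq (by positivity) one_pos.le
      _ = 1 := one_mul 1

lemma binomC_rec (m : ℕ) (k : ℕ) :
    ((k:ℝ) + 1) * binomC m (k + 1) = (2 / m + k) * binomC m k := by
  have hk : ((k:ℝ) + 1) ≠ 0 := by positivity
  show ((k:ℝ) + 1) * (binomC m k * ((2 / m + k) / (k + 1))) = _
  field_simp

lemma summable_binomC_mul {m : ℕ} (hm : 2 ≤ m) {z : ℂ} (hz : ‖z‖ < 1) :
    Summable fun k => (binomC m k : ℂ) * z ^ k := by
  refine Summable.of_norm_bounded (g := fun k => ‖z‖ ^ k)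
    (summable_geometric_of_lt_one (norm_nonneg z) hz) fun k => ?_
  rw [norm_mul, norm_pow]
  calc ‖((binomC m k : ℝ) : ℂ)‖ * ‖z‖ ^ k ≤ 1 * ‖z‖ ^ k := by
        apply mul_le_mul_of_nonneg_right _ (by positivity)
        rw [Complex.norm_real, Real.norm_eq_abs, abs_of_pos (binomC_pos hm k)]
        exact binomC_le_one hm k
    _ = ‖z‖ ^ k := one_mul _

lemma summable_deriv_aux {r : ℝ} (hr : r < 1) (hr0 : 0 ≤ r) :
    Summable fun k : ℕ => (k : ℝ) * r ^ (k - 1) := by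
  rw [← summable_nat_add_iff 1]
  have h1 : Summable fun k : ℕ => (k : ℝ) ^ 1 * r ^ k :=
    summable_pow_mul_geometric_of_norm_lt_one 1 (by rwa [Real.norm_eq_abs, _root_.abs_of_nonneg hr0])
  have h2 : Summable fun k : ℕ => r ^ k := summable_geometric_of_lt_one hr0 hr
  have := h1.add h2
  refine this.congr fun k => ?_
  simp only [Nat.add_sub_cancel, pow_one]
  push_cast
  ring

/-- The binomial series for `(1 - w) ^ (-2/m)`. -/
lemma hasSum_binom {m : ℕ} (hm : 2 ≤ m) {w : ℂ} (hw : ‖w‖ < 1) :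
    HasSum (fun k => (binomC m k : ℂ) * w ^ k) ((1 - w) ^ (-(2 : ℂ) / (m : ℂ))) := by
  have hm0 : (0:ℝ) < m := by positivity
  set a : ℂ := (2 : ℂ) / (m : ℂ) with ha
  set S : ℂ → ℂ := fun z => ∑' k, (binomC m k : ℂ) * z ^ k with hS
  -- derivative of S
  have hderiv : ∀ z : ℂ, ‖z‖ < 1 →
      HasDerivAt S (∑' k, (binomC m k : ℂ) * ((k : ℂ) * z ^ (k - 1))) z := by
    intro z hzn
    set r : ℝ := (1 + ‖z‖) / 2 with hrdef
    have hr1 : r < 1 := by rw [hrdef]; linarith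
    have hzr : ‖z‖ < r := by rw [hrdef]; linarith [norm_nonneg z]
    have hr0 : 0 ≤ r := by positivity
    refine hasDerivAt_tsum_of_isPreconnected (y₀ := (0:ℂ)) (summable_deriv_aux hr1 hr0)
      (isOpen_ball (x := (0:ℂ)) (ε := r)) ((convex_ball (0:ℂ) r).isPreconnected)
      (g := fun k z => (binomC m k : ℂ) * z ^ k)
      (g' := fun k y => (binomC m k : ℂ) * ((k : ℂ) * y ^ (k - 1)))
      (fun k y _ => ((hasDerivAt_pow k y).const_mul _)) ?_ ?_ ?_ ?_
    · intro k y hy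
      rw [mem_ball_zero_iff] at hy
      rw [norm_mul, norm_mul, norm_pow]
      have h1 : ‖((binomC m k : ℝ) : ℂ)‖ ≤ 1 := by
        rw [Complex.norm_real, Real.norm_eq_abs, abs_of_pos (binomC_pos hm k)]
        exact binomC_le_one hm k
      have h2 : ‖y‖ ^ (k - 1) ≤ r ^ (k - 1) := pow_le_pow_left₀ (norm_nonneg y) hy.le _
      calc ‖((binomC m k : ℝ) : ℂ)‖ * (‖(k : ℂ)‖ * ‖y‖ ^ (k - 1))
          ≤ 1 * ((k : ℝ) * r ^ (k - 1)) := by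
            refine mul_le_mul h1 ?_ (by positivity) one_pos.le
            refine mul_le_mul ?_ h2 (by positivity) (Nat.cast_nonneg k)
            simp
        _ = (k : ℝ) * r ^ (k - 1) := one_mul _
    · exact mem_ball_self (by positivity)
    · exact summable_binomC_mul hm (by norm_num)
    · exact mem_ball_zero_iff.mpr hzr
  -- the functional identity (1 - z) * S' z = a * S z
  have hkey : ∀ z : ℂ, ‖z‖ < 1 →
      (1 - z) * (∑' k, (binomC m k : ℂ) * ((k : ℂ) * z ^ (k - 1))) = a * S z := by
    intro z hzn
    set D : ℂ := ∑' k, (binomC m k : ℂ) * ((k : ℂ) * z ^ (k - 1)) with hD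
    have hsumD : Summable fun k => (binomC m k : ℂ) * ((k : ℂ) * z ^ (k - 1)) := by
      set r : ℝ := (1 + ‖z‖) / 2 with hrdef
      have hr1 : r < 1 := by rw [hrdef]; linarith
      have hzr : ‖z‖ < r := by rw [hrdef]; linarith [norm_nonneg z]
      have hr0 : 0 ≤ r := by positivity
      refine Summable.of_norm_bounded (summable_deriv_aux hr1 hr0) fun k => ?_
      rw [norm_mul, norm_mul, norm_pow]
      have h1 : ‖((binomC m k : ℝ) : ℂ)‖ ≤ 1 := by
        rw [Complex.norm_real, Real.norm_eq_abs, abs_of_pos (binomC_pos hm k)]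
        exact binomC_le_one hm k
      have h2 : ‖z‖ ^ (k - 1) ≤ r ^ (k - 1) := pow_le_pow_left₀ (norm_nonneg z) hzr.le _
      calc ‖((binomC m k : ℝ) : ℂ)‖ * (‖(k : ℂ)‖ * ‖z‖ ^ (k - 1))
          ≤ 1 * ((k : ℝ) * r ^ (k - 1)) := by
            refine mul_le_mul h1 ?_ (by positivity) one_pos.le
            refine mul_le_mul ?_ h2 (by positivity) (Nat.cast_nonneg k)
            simp
        _ = (k : ℝ) * r ^ (k - 1) := one_mul _
    have hDsum : HasSum (fun k => (binomC m k : ℂ) * ((k : ℂ) * z ^ (k - 1))) D := hsumD.hasSum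
    -- shift : HasSum (fun k => C (k+1) * ((k+1) * z^k)) D
    have hshift : HasSum (fun k => (binomC m (k + 1) : ℂ) * (((k : ℂ) + 1) * z ^ k)) D := by
      have hinj : Function.Injective (fun k : ℕ => k + 1) := fun x y h => by simpa using h
      have hvan : ∀ j ∉ Set.range (fun k : ℕ => k + 1),
          (binomC m j : ℂ) * ((j : ℂ) * z ^ (j - 1)) = 0 := by
        intro j hj
        have : j = 0 := by
          by_contra h
          exact hj ⟨j - 1, show j - 1 + 1 = j by omega⟩
        subst this; simp
      have := (Function.Injective.hasSum_iff hinj hvan).mpr hDsum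
      refine this.congr_fun fun k => ?_
      simp only [Function.comp_apply, Nat.add_sub_cancel]
      push_cast
      ring
    have hzD : HasSum (fun k => (binomC m k : ℂ) * ((k : ℂ) * z ^ k)) (z * D) := by
      have := hDsum.mul_left z
      refine this.congr_fun fun k => ?_
      cases k with
      | zero => simp
      | succ k =>
        simp only [Nat.add_sub_cancel]
        push_cast
        ring_nf
    have hsub := hshift.sub hzD
    have hterm : ∀ k : ℕ, (binomC m (k + 1) : ℂ) * (((k : ℂ) + 1) * z ^ k)
        - (binomC m k : ℂ) * ((k : ℂ) * z ^ k) = a * ((binomC m k : ℂ) * z ^ k) := by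
      intro k
      have hrec : (((k : ℂ)) + 1) * (binomC m (k + 1) : ℂ)
          = ((2 : ℂ) / (m : ℂ) + k) * (binomC m k : ℂ) := by
        have := binomC_rec m k
        have h2 : (((2 / (m:ℝ) + k) * binomC m k : ℝ) : ℂ)
            = ((((k:ℝ) + 1) * binomC m (k + 1) : ℝ) : ℂ) := by rw [this]
        push_cast at h2 ⊢
        linear_combination -h2
      rw [ha]
      calc (binomC m (k + 1) : ℂ) * (((k : ℂ) + 1) * z ^ k)
            - (binomC m k : ℂ) * ((k : ℂ) * z ^ k)
          = ((((k : ℂ)) + 1) * (binomC m (k + 1) : ℂ)) * z ^ k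
            - (binomC m k : ℂ) * ((k : ℂ) * z ^ k) := by ring
        _ = (((2 : ℂ) / (m : ℂ) + k) * (binomC m k : ℂ)) * z ^ k
            - (binomC m k : ℂ) * ((k : ℂ) * z ^ k) := by rw [hrec]
        _ = (2 : ℂ) / (m : ℂ) * ((binomC m k : ℂ) * z ^ k) := by ring
    have hsub' : HasSum (fun k => a * ((binomC m k : ℂ) * z ^ k)) (D - z * D) :=
      hsub.congr_fun fun k => (hterm k).symm
    have hSsum : HasSum (fun k => a * ((binomC m k : ℂ) * z ^ k)) (a * S z) :=
      (summable_binomC_mul hm hzn).hasSum.mul_left a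
    have := hsub'.unique hSsum
    linear_combination this
  -- F has zero derivative
  have hF : ∀ z : ℂ, ‖z‖ < 1 → HasDerivAt (fun w => (1 - w) ^ a * S w) 0 z := by
    intro z hzn
    have hre : 0 < (1 - z).re := by
      simp only [Complex.sub_re, Complex.one_re]
      have := Complex.abs_re_le_norm z
      have : z.re < 1 := lt_of_le_of_lt (le_trans (le_abs_self _) this) hzn
      linarith
    have hslit : (1 - z) ∈ Complex.slitPlane := Or.inl hre
    have hne : (1 - z) ≠ 0 := Complex.slitPlane_ne_zero hslit
    have h1 : HasDerivAt (fun w : ℂ => 1 - w) (-1) z := by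
      simpa using (hasDerivAt_id z).const_sub 1
    have h2 : HasDerivAt (fun w : ℂ => (1 - w) ^ a) (a * (1 - z) ^ (a - 1) * (-1)) z :=
      h1.cpow_const hslit
    have h3 := h2.mul (hderiv z hzn)
    refine h3.congr_deriv (Eq.symm ?_)
    have hsplit : (1 - z) ^ a = (1 - z) ^ (a - 1) * (1 - z) := by
      conv_lhs => rw [show a = (a - 1) + 1 by ring]
      rw [Complex.cpow_add _ _ hne, Complex.cpow_one]
    rw [hsplit]
    have := hkey z hzn
    rw [mul_comm ((1:ℂ) - z) _] at this
    calc (0:ℂ) = (1 - z) ^ (a - 1) * ((-(a * S z)) + (∑' k, (binomC m k : ℂ) * ((k : ℂ) * z ^ (k - 1))) * (1 - z)) := by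
          rw [this]; ring
      _ = a * (1 - z) ^ (a - 1) * -1 * S z + (1 - z) ^ (a - 1) * (1 - z) * (∑' k, (binomC m k : ℂ) * ((k : ℂ) * z ^ (k - 1))) := by ring
  -- F constant, F 0 = 1
  have hconst : ∀ z : ℂ, ‖z‖ < 1 → (1 - z) ^ a * S z = 1 := by
    intro z hzn
    have hc : (1 - z) ^ a * S z = (1 - (0:ℂ)) ^ a * S 0 := by
      refine (convex_ball (0:ℂ) 1).is_const_of_fderivWithin_eq_zero (𝕜 := ℂ)
        (f := fun w => (1 - w) ^ a * S w) ?_ ?_ ?_ ?_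
      · intro w hw
        rw [mem_ball_zero_iff] at hw
        exact ((hF w hw).differentiableAt).differentiableWithinAt
      · intro w hw
        have hw' : ‖w‖ < 1 := mem_ball_zero_iff.mp hw
        rw [fderivWithin_of_isOpen isOpen_ball hw]
        have := (hF w hw').hasFDerivAt.fderiv
        rw [this]
        ext x
        simp
      · exact mem_ball_zero_iff.mpr hzn
      · exact mem_ball_self one_pos
    have hS0 : S 0 = 1 := by
      have h0 : S 0 = ∑' k, (binomC m k : ℂ) * (0:ℂ) ^ k := rfl
      rw [h0, tsum_eq_single 0 (fun k hk => by simp [zero_pow hk])]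
      simp [binomC]
    simpa [hS0, Complex.one_cpow] using hc
  -- conclude
  have hSval : S w = (1 - w) ^ (-(2 : ℂ) / (m : ℂ)) := by
    have h := hconst w hw
    have hre : 0 < (1 - w).re := by
      simp only [Complex.sub_re, Complex.one_re]
      have := Complex.abs_re_le_norm w
      have : w.re < 1 := lt_of_le_of_lt (le_trans (le_abs_self _) this) hw
      linarith
    have hne : (1 - w) ≠ 0 := fun h0 => by simp [h0] at hre
    have hcp : (1 - w) ^ a ≠ 0 := by
      intro h0
      exact hne ((Complex.cpow_eq_zero_iff _ _).mp h0).1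
    have : S w = ((1 - w) ^ a)⁻¹ := by
      field_simp at h ⊢
      linear_combination h
    rw [this, ← Complex.cpow_neg]
    congr 1
    rw [ha]
    ring
  rw [← hSval]
  exact (summable_binomC_mul hm hw).hasSum

/-- Taylor coefficients of the root transform. -/
noncomputable def rkCoeff (m : ℕ) (θ : ℝ) (j : ℕ) : ℂ :=
  if j % m = 1 then (binomC m (j / m) : ℂ) * Complex.exp ((θ : ℂ) * I) ^ (j / m) else 0

lemma rkCoeff_norm_le_one {m : ℕ} (hm : 2 ≤ m) (θ : ℝ) (j : ℕ) :
    ‖rkCoeff m θ j‖ ≤ 1 := by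
  rw [rkCoeff]
  split
  · rw [norm_mul, norm_pow, Complex.norm_exp_ofReal_mul_I, one_pow, mul_one,
      Complex.norm_real, Real.norm_eq_abs, _root_.abs_of_pos (binomC_pos hm _)]
    exact binomC_le_one hm _
  · simp

lemma hasSum_rootKoebe {m : ℕ} (hm : 2 ≤ m) (θ : ℝ) {z : ℂ} (hz : ‖z‖ < 1) :
    HasSum (fun j => rkCoeff m θ j * z ^ j) (rootKoebe m θ z) := by
  set u : ℂ := Complex.exp ((θ : ℂ) * I) with hu
  have hun : ‖u‖ = 1 := Complex.norm_exp_ofReal_mul_I θ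
  have hm1 : 1 ≤ m := le_trans (by norm_num) hm
  have hw : ‖u * z ^ m‖ < 1 := by
    rw [norm_mul, hun, one_mul, norm_pow]
    exact pow_lt_one₀ (norm_nonneg z) hz (by omega)
  have hb := (hasSum_binom hm hw).mul_left z
  rw [show z * (1 - u * z ^ m) ^ (-(2:ℂ)/(m:ℂ)) = rootKoebe m θ z from rfl] at hb
  have hinj : Function.Injective (fun k : ℕ => k * m + 1) := by
    intro x y h
    simp only at h
    have : x * m = y * m := by omega
    exact Nat.eq_of_mul_eq_mul_right (by omega) this
  have hvan : ∀ j ∉ Set.range (fun k : ℕ => k * m + 1), rkCoeff m θ j * z ^ j = 0 := by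
    intro j hj
    rw [rkCoeff]
    rw [if_neg]
    · simp
    · intro hmod
      refine hj ⟨j / m, ?_⟩
      show j / m * m + 1 = j
      calc j / m * m + 1 = m * (j / m) + j % m := by rw [hmod, mul_comm]
        _ = j := Nat.div_add_mod j m
  refine (Function.Injective.hasSum_iff hinj hvan).mp ?_
  refine hb.congr_fun fun k => ?_
  simp only [Function.comp_apply]
  have hmod : (k * m + 1) % m = 1 := by
    rw [add_comm, Nat.add_mul_mod_self_right]
    exact Nat.one_mod_eq_one.mpr (by omega)
  have hdiv : (k * m + 1) / m = k := by
    rw [mul_comm, Nat.mul_add_div (by omega : 0 < m)]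
    simp [Nat.div_eq_of_lt (by omega : 1 < m)]
  rw [rkCoeff, if_pos hmod, hdiv, mul_pow, ← pow_mul, pow_succ]
  ring

lemma hasFPowerSeries_rootKoebe {m : ℕ} (hm : 2 ≤ m) (θ : ℝ) :
    HasFPowerSeriesOnBall (rootKoebe m θ)
      (FormalMultilinearSeries.ofScalars ℂ (rkCoeff m θ)) 0 1 := by
  constructor
  · apply FormalMultilinearSeries.le_radius_of_bound _ 1
    intro n
    rw [FormalMultilinearSeries.ofScalars_norm]
    simpa using rkCoeff_norm_le_one hm θ n
  · exact one_pos
  · intro y hy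
    have hy' : ‖y‖ < 1 := by
      rw [EMetric.mem_ball, edist_zero_right, enorm_eq_nnnorm] at hy
      exact_mod_cast hy
    have := hasSum_rootKoebe hm θ hy'
    rw [zero_add]
    refine (hasSum_rootKoebe hm θ hy').congr_fun fun n => ?_
    rw [FormalMultilinearSeries.ofScalars_apply_eq, smul_eq_mul]

lemma taylorCoeff_rootKoebe {m : ℕ} (hm : 2 ≤ m) (θ : ℝ) (j : ℕ) :
    taylorCoeff (rootKoebe m θ) j = rkCoeff m θ j := by
  have h := (hasFPowerSeries_rootKoebe hm θ).factorial_smul (y := (1:ℂ)) j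
  rw [iteratedFDeriv_apply_eq_iteratedDeriv_mul_prod] at h
  simp only [Finset.prod_const_one, one_smul] at h
  have happ : (FormalMultilinearSeries.ofScalars ℂ (rkCoeff m θ)) j (fun _ => (1:ℂ))
      = rkCoeff m θ j := by
    rw [FormalMultilinearSeries.ofScalars_apply_eq]
    simp
  rw [happ] at h
  rw [taylorCoeff, ← h, nsmul_eq_mul]
  exact mul_div_cancel_left₀ _ (Nat.cast_ne_zero.mpr j.factorial_ne_zero)

/-- **Inequality (4.1)**: for all integers `m ≥ 2`, `n ≥ 3` and every `θ ∈ ℝ`,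
the root transform `κ_{m,θ}` satisfies the strict Zalcman inequality
`|a_n(κ_{m,θ})² − a_{2n−1}(κ_{m,θ})| < (n−1)²`. -/
theorem zalcman_strict_for_root_transforms (m n : ℕ) (hm : 2 ≤ m) (hn : 3 ≤ n) (θ : ℝ) :
    ‖taylorCoeff (rootKoebe m θ) n ^ 2 - taylorCoeff (rootKoebe m θ) (2 * n - 1)‖ <
      ((n : ℝ) - 1) ^ 2 := by

  rw [taylorCoeff_rootKoebe hm θ, taylorCoeff_rootKoebe hm θ]
  have h1 := rkCoeff_norm_le_one hm θ n
  have h2 := rkCoeff_norm_le_one hm θ (2 * n - 1)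
  have hb : ‖rkCoeff m θ n ^ 2 - rkCoeff m θ (2 * n - 1)‖ ≤ 2 := by
    calc ‖rkCoeff m θ n ^ 2 - rkCoeff m θ (2 * n - 1)‖
        ≤ ‖rkCoeff m θ n ^ 2‖ + ‖rkCoeff m θ (2 * n - 1)‖ := norm_sub_le _ _
      _ = ‖rkCoeff m θ n‖ ^ 2 + ‖rkCoeff m θ (2 * n - 1)‖ := by rw [norm_pow]
      _ ≤ 1 ^ 2 + 1 := by gcongr <;> first | exact norm_nonneg _ | assumption
      _ = 2 := by norm_num
  have hn' : (3:ℝ) ≤ (n:ℝ) := by exact_mod_cast hn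
  have : (2:ℝ) < ((n:ℝ) - 1) ^ 2 := by nlinarith
  linarith
end

section
/- Root transforms belong to S: For every integer m ≥ 1 and every θ ∈ ℝ, the root transform κ_{m,θ}(z) = z (1 − e^{iθ} z^m)^{−2/m} is holomorphic and injective on the open unit disk Δ, satisfies κ_{m,θ}(0) = 0 and κ_{m,θ}'(0) = 1 (hence belongs to the class S), its Taylor coefficient of z^{m+1} equals 2e^{iθ}/m, and all Taylor coefficients a_k(κ_{m,θ}) with k not congruent to 1 modulo m vanish. -/
open Complex Metric

open FormalMultilinearSeries

lemma ofScalars_coeff (a : ℕ → ℂ) (n : ℕ) : (ofScalars ℂ a).coeff n = a n := by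
  show (ofScalars ℂ a) n (fun _ => (1:ℂ)) = a n
  rw [ofScalars_apply_eq, one_pow, smul_eq_mul, mul_one]

lemma hasFPS_ofScalars {f : ℂ → ℂ} {a : ℕ → ℂ}
    (h : ∀ z : ℂ, ‖z‖ < 1 → HasSum (fun n => a n * z ^ n) (f z)) :
    HasFPowerSeriesOnBall f (ofScalars ℂ a) 0 1 := by
  constructor
  · refine ENNReal.le_of_forall_nnreal_lt fun r hr => ?_
    have hr1 : (r : ℝ) < 1 := by exact_mod_cast hr
    have hrn : ‖((r : ℝ) : ℂ)‖ < 1 := by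
      rw [Complex.norm_real, Real.norm_eq_abs, _root_.abs_of_nonneg r.coe_nonneg]; exact hr1
    have hs := (h ((r : ℝ) : ℂ) hrn).summable
    refine le_radius_of_tendsto _ (l := 0) ?_
    have h2 := hs.tendsto_atTop_zero.norm
    simp only [norm_zero] at h2
    refine h2.congr fun n => ?_
    rw [ofScalars_norm, norm_mul, norm_pow, Complex.norm_real, Real.norm_eq_abs,
      _root_.abs_of_nonneg r.coe_nonneg]
  · exact one_pos
  · intro y hy
    rw [EMetric.mem_ball, edist_zero_right] at hy
    have hy1 : ‖y‖ < 1 := by rw [← ofReal_norm] at hy; exact ENNReal.ofReal_lt_one.mp hy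
    have h3 := h y hy1
    have h4 : ∀ n, (ofScalars ℂ a) n (fun _ => y) = a n * y ^ n := by
      intro n; rw [ofScalars_apply_eq, smul_eq_mul]
    rw [zero_add]
    exact HasSum.congr_fun h3 fun n => h4 n

/-- If `ω^j = 1` for `ω = exp(2πi/m)`, then `m ∣ j`. -/
lemma root_of_unity_dvd {m : ℕ} (hm : 1 ≤ m) {j : ℕ}
    (h : Complex.exp (2 * (Real.pi : ℂ) * I / m) ^ j = 1) : m ∣ j := by
  have hm0 : (m : ℂ) ≠ 0 := Nat.cast_ne_zero.mpr (by omega)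
  rw [← Complex.exp_nat_mul] at h
  obtain ⟨k, hk⟩ := Complex.exp_eq_one_iff.mp h
  have h2 : (j : ℂ) * (2 * (Real.pi : ℂ) * I) = (k * m) * (2 * (Real.pi : ℂ) * I) := by
    field_simp at hk
    linear_combination (2 * (Real.pi : ℂ) * I) * hk
  have h3 : (j : ℂ) = (k * m : ℤ) := by
    have := mul_right_cancel₀ Complex.two_pi_I_ne_zero h2
    push_cast
    exact this
  have h4 : (j : ℤ) = k * m := by exact_mod_cast h3
  have h5 : (m : ℤ) ∣ (j : ℤ) := ⟨k, by rw [h4, mul_comm]⟩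
  exact_mod_cast h5

lemma root_of_unity_pow_self {m : ℕ} (hm : 1 ≤ m) :
    Complex.exp (2 * (Real.pi : ℂ) * I / m) ^ m = 1 := by
  have hm0 : (m : ℂ) ≠ 0 := Nat.cast_ne_zero.mpr (by omega)
  rw [← Complex.exp_nat_mul, mul_div_cancel₀ _ hm0, Complex.exp_two_pi_mul_I]

/-- **Root transforms belong to `S`**: for every integer `m ≥ 1` and `θ ∈ ℝ`,
`κ_{m,θ}` is holomorphic and injective on the unit disk, `κ_{m,θ}(0) = 0`,
`κ_{m,θ}'(0) = 1` (so `κ_{m,θ} ∈ S`), its Taylor coefficient of `z^{m+1}` is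
`2e^{iθ}/m`, and all Taylor coefficients `a_k` with `k ≢ 1 (mod m)` vanish. -/
theorem rootKoebe_properties (m : ℕ) (hm : 1 ≤ m) (θ : ℝ) :
    DifferentiableOn ℂ (rootKoebe m θ) (ball (0 : ℂ) 1) ∧
    Set.InjOn (rootKoebe m θ) (ball (0 : ℂ) 1) ∧
    rootKoebe m θ 0 = 0 ∧
    deriv (rootKoebe m θ) 0 = 1 ∧
    IsClassS (rootKoebe m θ) ∧
    taylorCoeff (rootKoebe m θ) (m + 1) = 2 * Complex.exp ((θ : ℂ) * I) / (m : ℂ) ∧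
    (∀ k : ℕ, k % m ≠ 1 % m → taylorCoeff (rootKoebe m θ) k = 0) := by
  have hm0 : (m : ℂ) ≠ 0 := Nat.cast_ne_zero.mpr (by omega)
  set c : ℂ := Complex.exp ((θ : ℂ) * I) with hc
  set s : ℂ := -(2 : ℂ) / (m : ℂ) with hs
  set g : ℂ → ℂ := fun z => (1 - c * z ^ m) ^ s with hgdef
  have hKg : rootKoebe m θ = fun z => z * g z := rfl
  -- basic facts
  have hnorm : ∀ {z : ℂ}, ‖z‖ < 1 → ‖c * z ^ m‖ < 1 := by
    intro z hz
    rw [norm_mul, norm_pow]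
    have : ‖c‖ = 1 := by rw [hc, Complex.norm_exp_ofReal_mul_I]
    rw [this, one_mul]
    exact pow_lt_one₀ (norm_nonneg z) hz (by omega)
  have hslit : ∀ {z : ℂ}, ‖z‖ < 1 → 1 - c * z ^ m ∈ Complex.slitPlane := by
    intro z hz
    refine Complex.mem_slitPlane_iff.mpr (Or.inl ?_)
    have h1 : (c * z ^ m).re ≤ ‖c * z ^ m‖ := Complex.re_le_norm _
    have := hnorm hz
    simp only [Complex.sub_re, Complex.one_re]
    linarith
  have hne : ∀ {z : ℂ}, ‖z‖ < 1 → 1 - c * z ^ m ≠ 0 :=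
    fun hz => Complex.slitPlane_ne_zero (hslit hz)
  have hgne : ∀ {z : ℂ}, ‖z‖ < 1 → g z ≠ 0 := by
    intro z hz
    simp only [hgdef, ne_eq, Complex.cpow_eq_zero_iff, not_and_or, not_ne_iff]
    exact Or.inl (hne hz)
  have hgdiff : ∀ {z : ℂ}, ‖z‖ < 1 → DifferentiableAt ℂ g z := by
    intro z hz
    exact DifferentiableAt.cpow
      ((differentiableAt_const _).sub ((differentiableAt_const c).mul (differentiableAt_pow m)))
      (differentiableAt_const s) (hslit hz)
  have hKdiff : ∀ {z : ℂ}, ‖z‖ < 1 → DifferentiableAt ℂ (rootKoebe m θ) z := by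
    intro z hz
    rw [hKg]
    exact differentiableAt_id.mul (hgdiff hz)
  have hdiffOn : DifferentiableOn ℂ (rootKoebe m θ) (ball (0 : ℂ) 1) :=
    fun z hz => (hKdiff (mem_ball_zero_iff.mp hz)).differentiableWithinAt
  have hgdiffOn : DifferentiableOn ℂ g (ball (0 : ℂ) 1) :=
    fun z hz => (hgdiff (mem_ball_zero_iff.mp hz)).differentiableWithinAt
  have hK0 : rootKoebe m θ 0 = 0 := by simp [rootKoebe]
  have hg0 : g 0 = 1 := by
    simp only [hgdef]
    rw [zero_pow (by omega : m ≠ 0), mul_zero, sub_zero, Complex.one_cpow]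
  have hderiv : deriv (rootKoebe m θ) 0 = 1 := by
    have h1 : HasDerivAt (rootKoebe m θ) (1 * g 0 + 0 * deriv g 0) 0 := by
      rw [hKg]
      exact (hasDerivAt_id (0 : ℂ)).mul ((hgdiff (by norm_num)).hasDerivAt)
    rw [h1.deriv, hg0]
    ring
  -- injectivity
  have hinj : Set.InjOn (rootKoebe m θ) (ball (0 : ℂ) 1) := by
    intro z₁ h₁ z₂ h₂ he
    rw [mem_ball_zero_iff] at h₁ h₂
    rw [hKg] at he
    simp only at he
    have hgm : ∀ {z : ℂ}, ‖z‖ < 1 → (g z) ^ m = ((1 - c * z ^ m) ^ 2)⁻¹ := by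
      intro z hz
      have h3 : (1 - c * z ^ m) ^ (s * m) = ((1 - c * z ^ m) ^ s) ^ m :=
        Complex.cpow_mul_nat _ _ _
      have h4 : s * m = ((-2 : ℤ) : ℂ) := by
        rw [hs]; field_simp; norm_num
      rw [h4, Complex.cpow_intCast] at h3
      rw [hgdef, ← h3, zpow_neg]
      norm_cast
    have hem : z₁ ^ m * ((1 - c * z₁ ^ m) ^ 2)⁻¹ = z₂ ^ m * ((1 - c * z₂ ^ m) ^ 2)⁻¹ := by
      have := congrArg (· ^ m) he
      simpa only [mul_pow, hgm h₁, hgm h₂] using this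
    have hne₁ : (1 - c * z₁ ^ m) ≠ 0 := hne h₁
    have hne₂ : (1 - c * z₂ ^ m) ≠ 0 := hne h₂
    have hkey : (c * z₁ ^ m - c * z₂ ^ m) * (1 - (c * z₁ ^ m) * (c * z₂ ^ m)) = 0 := by
      have h5 : z₁ ^ m * (1 - c * z₂ ^ m) ^ 2 = z₂ ^ m * (1 - c * z₁ ^ m) ^ 2 := by
        have hne₁' : (1 - z₁ ^ m * c) ^ 2 ≠ 0 := by rw [mul_comm]; exact pow_ne_zero 2 hne₁
        field_simp at hem
        rw [div_eq_iff hne₁'] at hem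
        linear_combination hem
      linear_combination c * h5
    have h1mw : 1 - (c * z₁ ^ m) * (c * z₂ ^ m) ≠ 0 := by
      intro h
      have h6 : ‖(c * z₁ ^ m) * (c * z₂ ^ m)‖ < 1 := by
        rw [norm_mul]
        calc ‖c * z₁ ^ m‖ * ‖c * z₂ ^ m‖ ≤ 1 * ‖c * z₂ ^ m‖ :=
              mul_le_mul_of_nonneg_right (hnorm h₁).le (norm_nonneg _)
          _ = ‖c * z₂ ^ m‖ := one_mul _
          _ < 1 := hnorm h₂
      have h7 : (c * z₁ ^ m) * (c * z₂ ^ m) = 1 := by linear_combination -h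
      rw [h7] at h6
      simp at h6
    have hw : c * z₁ ^ m = c * z₂ ^ m := by
      rcases mul_eq_zero.mp hkey with h | h
      · linear_combination h
      · exact absurd h h1mw
    have hgeq : g z₁ = g z₂ := by rw [hgdef]; simp only [hw]
    rw [hgeq] at he
    exact mul_right_cancel₀ (hgne h₂) he
  -- power series
  set a : ℕ → ℂ := taylorCoeff (rootKoebe m θ) with ha
  set b : ℕ → ℂ := taylorCoeff g with hb
  have hsum : ∀ (f : ℂ → ℂ), DifferentiableOn ℂ f (ball (0:ℂ) 1) → ∀ z : ℂ, ‖z‖ < 1 →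
      HasSum (fun n => taylorCoeff f n * z ^ n) (f z) := by
    intro f hf z hz
    have := Complex.hasSum_taylorSeries_on_ball hf (mem_ball_zero_iff.mpr hz)
    refine this.congr_fun fun n => ?_
    simp only [taylorCoeff, sub_zero, smul_eq_mul]
    ring
  have pK : HasFPowerSeriesOnBall (rootKoebe m θ) (ofScalars ℂ a) 0 1 :=
    hasFPS_ofScalars (fun z hz => hsum _ hdiffOn z hz)
  have qg : HasFPowerSeriesOnBall g (ofScalars ℂ b) 0 1 :=
    hasFPS_ofScalars (fun z hz => hsum _ hgdiffOn z hz)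
  -- rotation
  set ω : ℂ := Complex.exp (2 * (Real.pi : ℂ) * I / m) with hω
  have hωm : ω ^ m = 1 := root_of_unity_pow_self hm
  have hωnorm : ‖ω‖ = 1 := by
    rw [hω, Complex.norm_exp]
    have : (2 * (Real.pi : ℂ) * I / m).re = 0 := by
      simp [Complex.div_re, Complex.mul_re]
    rw [this, Real.exp_zero]
  have hωne : ω ≠ 0 := Complex.exp_ne_zero _
  have rot_coeff : ∀ (f : ℂ → ℂ) (u : ℕ → ℂ) (μ : ℂ),
      HasFPowerSeriesOnBall f (ofScalars ℂ u) 0 1 →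
      (∀ z : ℂ, ‖z‖ < 1 → f (ω * z) = μ * f z) →
      ∀ n, u n * ω ^ n = μ * u n := by
    intro f u μ hf hfe
    have hsum' : ∀ z : ℂ, ‖z‖ < 1 → HasSum (fun n => u n * z ^ n) (f z) := by
      intro z hz
      have := hf.hasSum (y := z) (by
        rw [EMetric.mem_ball, edist_zero_right]
        rw [← ofReal_norm]; exact ENNReal.ofReal_lt_one.mpr hz)
      rw [zero_add] at this
      refine this.congr_fun fun n => ?_
      rw [ofScalars_apply_eq, smul_eq_mul]
    have h1 : HasFPowerSeriesOnBall (fun z => f (ω * z)) (ofScalars ℂ (fun n => u n * ω ^ n)) 0 1 := by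
      refine hasFPS_ofScalars fun z hz => ?_
      have hωz : ‖ω * z‖ < 1 := by rw [norm_mul, hωnorm, one_mul]; exact hz
      have := hsum' (ω * z) hωz
      refine this.congr_fun fun n => ?_
      rw [mul_pow]; ring
    have h2 : HasFPowerSeriesOnBall (fun z => f (ω * z)) (ofScalars ℂ (fun n => μ * u n)) 0 1 := by
      refine hasFPS_ofScalars fun z hz => ?_
      have := (hsum' z hz).mul_left μ
      rw [← hfe z hz] at this
      refine this.congr_fun fun n => ?_
      ring
    have h3 := h1.hasFPowerSeriesAt.eq_formalMultilinearSeries h2.hasFPowerSeriesAt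
    intro n
    have := congrArg (fun p => FormalMultilinearSeries.coeff p n) h3
    simpa only [ofScalars_coeff] using this
  have hKrot : ∀ z : ℂ, ‖z‖ < 1 → rootKoebe m θ (ω * z) = ω * rootKoebe m θ z := by
    intro z hz
    rw [hKg]
    simp only [hgdef]
    rw [mul_pow, hωm, one_mul]
    ring
  have hgrot : ∀ z : ℂ, ‖z‖ < 1 → g (ω * z) = 1 * g z := by
    intro z hz
    rw [one_mul, hgdef]
    simp only [mul_pow, hωm, one_mul]
  have haK := rot_coeff _ _ _ pK hKrot
  have hbg := rot_coeff _ _ _ qg hgrot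
  -- vanishing of a k for k % m ≠ 1 % m
  have hvanish : ∀ k : ℕ, k % m ≠ 1 % m → a k = 0 := by
    intro k hk
    by_contra hak
    have h1 : ω ^ k = ω := by
      have := haK k
      have h2 : a k * ω ^ k = a k * ω := by rw [this]; ring
      exact mul_left_cancel₀ hak h2
    rcases k with _ | j
    · -- k = 0 : ω = 1, so m ∣ 1, m = 1
      have : ω ^ 1 = 1 := by rw [pow_one, ← h1, pow_zero]
      have hdvd := root_of_unity_dvd hm this
      have hm1 : m = 1 := Nat.dvd_one.mp hdvd
      subst hm1
      exact hk rfl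
    · have h2 := h1
      rw [pow_succ] at h2
      have h3 : ω ^ j = 1 := mul_right_cancel₀ hωne (h2.trans (one_mul ω).symm)
      obtain ⟨t, rfl⟩ := root_of_unity_dvd hm h3
      exact hk (by rw [add_comm, Nat.add_mul_mod_self_left])
  -- vanishing of b j for ¬ m ∣ j
  have hbvanish : ∀ j : ℕ, ¬ (m ∣ j) → b j = 0 := by
    intro j hj
    by_contra hbj
    have h1 : ω ^ j = 1 := by
      have := hbg j
      have h2 : b j * ω ^ j = b j * 1 := by rw [this]; ring
      exact mul_left_cancel₀ hbj h2
    exact hj (root_of_unity_dvd hm h1)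
  -- a (n+1) = b n
  have hdsl : dslope (rootKoebe m θ) 0 = g := by
    funext z
    rcases eq_or_ne z 0 with rfl | hz
    · rw [dslope_same, hderiv, hg0]
    · rw [dslope_of_ne _ hz, slope_def_field, hK0, hKg]
      field_simp
      ring
  have hab : ∀ n, a (n + 1) = b n := by
    have h1 := pK.hasFPowerSeriesAt.has_fpower_series_dslope_fslope
    rw [hdsl] at h1
    have h2 := h1.eq_formalMultilinearSeries qg.hasFPowerSeriesAt
    intro n
    have := congrArg (fun p => FormalMultilinearSeries.coeff p n) h2
    simp only [FormalMultilinearSeries.coeff_fslope, ofScalars_coeff] at this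
    exact this
  -- compute b m via iterated dslope
  set G : ℕ → ℂ → ℂ := fun j => (Function.swap dslope 0)^[j] g with hG
  have hGpow : ∀ j, HasFPowerSeriesAt (G j) (FormalMultilinearSeries.fslope^[j] (ofScalars ℂ b)) 0 :=
    fun j => HasFPowerSeriesAt.has_fpower_series_iterate_dslope_fslope j qg.hasFPowerSeriesAt
  have hGval : ∀ j, G j 0 = b j := by
    intro j
    have h0 : (FormalMultilinearSeries.fslope^[j] (ofScalars ℂ b)).coeff 0 = G j 0 :=
      (hGpow j).coeff_zero (fun _ => (1:ℂ))
    rw [FormalMultilinearSeries.coeff_iterate_fslope, zero_add, ofScalars_coeff] at h0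
    exact h0.symm
  have hGsucc : ∀ j (z : ℂ), z ≠ 0 → G (j + 1) z = (G j z - G j 0) / z := by
    intro j z hz
    have e : G (j + 1) = dslope (G j) 0 := Function.iterate_succ_apply' _ _ _
    rw [e, dslope_of_ne _ hz, slope_def_field, sub_zero]
  have hkey : ∀ j, 1 ≤ j → j ≤ m → ∀ z : ℂ, z ≠ 0 → G j z = (g z - 1) / z ^ j := by
    intro j
    induction j with
    | zero => omega
    | succ j ih =>
      intro _ hjm z hz
      rcases Nat.eq_zero_or_pos j with rfl | hj
      · rw [hGsucc 0 z hz]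
        have hG0 : G 0 = g := rfl
        rw [hG0, hg0, pow_one]
      · have hbj : G j 0 = 0 := by
          rw [hGval]
          exact hbvanish j (fun hd => by
            rcases hd with ⟨t, rfl⟩
            rcases Nat.eq_zero_or_pos t with rfl | ht
            · omega
            · nlinarith [Nat.le_mul_of_pos_right m ht])
        rw [hGsucc j z hz, hbj, sub_zero, ih hj (by omega) z hz, pow_succ, div_div]
  -- limits
  have hG0cont : ContinuousAt (G m) 0 := (hGpow m).continuousAt
  have hlim1 : Filter.Tendsto (G m) (nhdsWithin 0 {(0:ℂ)}ᶜ) (nhds (b m)) := by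
    rw [← hGval m]
    exact hG0cont.continuousWithinAt
  have hlim2 : Filter.Tendsto (fun z : ℂ => (g z - 1) / z ^ m)
      (nhdsWithin 0 {(0:ℂ)}ᶜ) (nhds (2 * c / m)) := by
    set h : ℂ → ℂ := fun u => (1 - c * u) ^ s with hh
    have hder : HasDerivAt h (2 * c / m) 0 := by
      have h1 : HasDerivAt (fun u : ℂ => 1 - c * u) (-c) 0 := by
        simpa using ((hasDerivAt_id (0:ℂ)).const_mul c).const_sub 1
      have hslit1 : (1 : ℂ) - c * 0 ∈ Complex.slitPlane := by
        rw [mul_zero, sub_zero]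
        exact Complex.one_mem_slitPlane
      have h2 := h1.cpow_const (c := s) hslit1
      convert h2 using 1
      rw [mul_zero, sub_zero, Complex.one_cpow, hs]
      field_simp
    have hslope := hasDerivAt_iff_tendsto_slope.mp hder
    have hpow : Filter.Tendsto (fun z : ℂ => z ^ m)
        (nhdsWithin 0 {(0:ℂ)}ᶜ) (nhdsWithin 0 {(0:ℂ)}ᶜ) := by
      rw [tendsto_nhdsWithin_iff]
      constructor
      · have := (continuous_pow m (M := ℂ)).tendsto 0
        rw [zero_pow (by omega : m ≠ 0)] at this
        exact this.mono_left nhdsWithin_le_nhds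
      · filter_upwards [self_mem_nhdsWithin] with z hz
        simp only [Set.mem_compl_iff, Set.mem_singleton_iff] at hz ⊢
        exact pow_ne_zero m hz
    have hcomp := hslope.comp hpow
    refine hcomp.congr' ?_
    filter_upwards [self_mem_nhdsWithin] with z hz
    have hzm : z ^ m ≠ 0 := pow_ne_zero m hz
    simp only [Function.comp_apply, slope_def_field, sub_zero]
    have hh0 : h 0 = 1 := by rw [hh]; simp [Complex.one_cpow]
    have hhz : h (z ^ m) = g z := rfl
    rw [hh0, hhz]
  have hbm : b m = 2 * c / m := by
    have heq : ∀ᶠ z in nhdsWithin 0 {(0:ℂ)}ᶜ, G m z = (g z - 1) / z ^ m := by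
      filter_upwards [self_mem_nhdsWithin] with z hz
      exact hkey m hm le_rfl z hz
    have := hlim1.congr' heq
    exact tendsto_nhds_unique this hlim2
  refine ⟨hdiffOn, hinj, hK0, hderiv, ⟨hdiffOn, hinj, hK0, hderiv⟩, ?_, hvanish⟩
  exact (hab m).trans hbm
end
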